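/- Let 0 < α < 1, let F be α-SR, and let r > 0 be a monopoly price of F, i.e. φ(r) = 0. Then 1 − F(r) ≥ α^{1/(1−α)}. -/

import Mathlib

open MeasureTheory Real Filter

/-- The virtual valuation function `φ(v) = v − (1 − F(v))/f(v)`. -/
noncomputable def virtualValue (F f : ℝ → ℝ) (v : ℝ) : ℝ := v - (1 - F v) / f v

/-- The hazard rate `h(v) = f(v)/(1 − F(v))`. -/
noncomputable def hazardRate (F f : ℝ → ℝ) (v : ℝ) : ℝ := f v / (1 - F v)

/-- `F` is the CDF of a continuous distribution supported on `[0, ∞)`,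
with density `f = F'` that is positive wherever `F < 1`. -/
structure IsCDF (F f : ℝ → ℝ) : Prop where
  zero : F 0 = 0
  mono : Monotone F
  le_one : ∀ v, F v ≤ 1
  tendsto_one : Tendsto F atTop (nhds 1)
  hasDeriv : ∀ v, 0 ≤ v → HasDerivAt F (f v) v
  f_pos : ∀ v, 0 ≤ v → F v < 1 → 0 < f v

/-- `F` is `α`-strongly regular: `φ(y) − φ(x) ≥ α (y − x)` for all `x < y` in the support. -/
def IsAlphaSR (α : ℝ) (F f : ℝ → ℝ) : Prop :=
  ∀ x y, 0 ≤ x → x < y → F y < 1 →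
    virtualValue F f y - virtualValue F f x ≥ α * (y - x)

theorem reserve_quantile_bound (α : ℝ) (F f : ℝ → ℝ)
    (hα0 : 0 < α) (hα1 : α < 1)
    (hcdf : IsCDF F f) (hSR : IsAlphaSR α F f)
    (r : ℝ) (hr : 0 < r) (hmon : virtualValue F f r = 0) :
    1 - F r ≥ α ^ (1 / (1 - α) : ℝ) := by
  have h1α : (0:ℝ) < 1 - α := by linarith
  -- F r < 1
  have hFr : F r < 1 := by
    by_contra h
    have : F r = 1 := le_antisymm (hcdf.le_one r) (not_lt.mp h)
    rw [virtualValue, this] at hmon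
    simp at hmon
    linarith
  have hFr' : 0 < 1 - F r := by linarith
  -- auxiliary function
  set g : ℝ → ℝ := fun v => Real.log (1 - F v) + (1-α)⁻¹ * Real.log ((1-α)*v + α*r) with hg
  -- positivity facts on [0,r]
  have hden : ∀ v ∈ Set.Icc (0:ℝ) r, 0 < (1-α)*v + α*r := by
    intro v hv
    have := hv.1
    nlinarith
  have hF1 : ∀ v ∈ Set.Icc (0:ℝ) r, 0 < 1 - F v := by
    intro v hv
    have := hcdf.mono hv.2
    linarith
  -- derivative of g
  have hderiv : ∀ v ∈ Set.Icc (0:ℝ) r,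
      HasDerivAt g ((1 - F v)⁻¹ * (-(f v)) + (1-α)⁻¹ * (((1-α)*v + α*r)⁻¹ * (1-α))) v := by
    intro v hv
    have hFv := hF1 v hv
    have hd := hden v hv
    have h1 : HasDerivAt (fun x => 1 - F x) (-(f v)) v :=
      (hcdf.hasDeriv v hv.1).const_sub 1
    have h2 : HasDerivAt (fun x => Real.log (1 - F x)) ((1 - F v)⁻¹ * (-(f v))) v :=
      by have := (Real.hasDerivAt_log (ne_of_gt hFv)).comp v h1; exact this
    have h3 : HasDerivAt (fun x => (1-α)*x + α*r) (1-α) v := by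
      simpa using ((hasDerivAt_id v).const_mul (1-α)).add_const (α*r)
    have h4 : HasDerivAt (fun x => Real.log ((1-α)*x + α*r))
        (((1-α)*v + α*r)⁻¹ * (1-α)) v :=
      by have := (Real.hasDerivAt_log (ne_of_gt hd)).comp v h3; exact this
    exact h2.add (h4.const_mul _)
  -- monotonicity of g on [0,r]
  have hmono : MonotoneOn g (Set.Icc 0 r) := by
    apply monotoneOn_of_deriv_nonneg (convex_Icc 0 r)
    · exact fun v hv => (hderiv v hv).continuousAt.continuousWithinAt
    · intro v hv
      rw [interior_Icc] at hv
      exact ((hderiv v ⟨hv.1.le, hv.2.le⟩).differentiableAt).differentiableWithinAt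
    · intro v hv
      rw [interior_Icc] at hv
      have hv' : v ∈ Set.Icc (0:ℝ) r := ⟨hv.1.le, hv.2.le⟩
      rw [(hderiv v hv').deriv]
      have hd := hden v hv'
      have hFv := hF1 v hv'
      have hfv : 0 < f v := hcdf.f_pos v hv.1.le (by linarith [hF1 v hv'])
      -- strong regularity gives (1-F v)/f v ≥ (1-α) v + α r
      have hsr := hSR v r hv.1.le hv.2 hFr
      rw [hmon, virtualValue] at hsr
      have key : (1-α)*v + α*r ≤ (1 - F v) / f v := by nlinarith
      have key2 : ((1-α)*v + α*r) * f v ≤ 1 - F v := (le_div_iff₀ hfv).mp key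
      have h5 : f v / (1 - F v) ≤ 1 / ((1-α)*v + α*r) := by
        rw [div_le_div_iff₀ hFv hd]; nlinarith
      have e1 : (1 - F v)⁻¹ * (-(f v)) = -(f v / (1 - F v)) := by ring
      have e2 : (1-α)⁻¹ * ((((1-α)*v + α*r))⁻¹ * (1-α)) = 1 / ((1-α)*v + α*r) := by
        field_simp
      rw [e1, e2]; linarith
  -- evaluate g at 0 and r
  have h0r : g 0 ≤ g r := hmono ⟨le_refl 0, hr.le⟩ ⟨hr.le, le_refl r⟩ hr.le
  have hg0 : g 0 = (1-α)⁻¹ * Real.log (α*r) := by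
    simp [hg, hcdf.zero]
  have hgr : g r = Real.log (1 - F r) + (1-α)⁻¹ * Real.log r := by
    have : (1-α)*r + α*r = r := by ring
    simp [hg, this]
  have hlog : Real.log (α*r) = Real.log α + Real.log r :=
    Real.log_mul (ne_of_gt hα0) (ne_of_gt hr)
  have hmain : (1-α)⁻¹ * Real.log α ≤ Real.log (1 - F r) := by
    rw [hg0, hgr, hlog, mul_add] at h0r
    linarith
  have hrpow : α ^ (1 / (1 - α) : ℝ) = Real.exp ((1-α)⁻¹ * Real.log α) := by
    rw [Real.rpow_def_of_pos hα0]
    ring_nf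
  rw [ge_iff_le, hrpow, ← Real.exp_log hFr']
  exact Real.exp_le_exp.mpr hmain
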